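/- arXiv:2108.10627 — 2 statements merged into one kernel-verified Lean document; each statement's English description precedes it below -/
import Mathlib

section
/- Let c > 0, v ∈ ℝ³ with |v|² < c², and 0 < p' ≤ c². With B₁, B₂, B₃, B₄ as defined by B₁ = c⁴ + 3p'|v|², B₂ = c⁴ + 2c²p' + p'|v|², B₃ = c²(c² + 3p'), B₄ = c²p'(c² − |v|²), the symmetric 4×4 matrix M with M₀₀ = B₁, M₀ₖ = Mₖ₀ = B₂·vₖ (k = 1,2,3), and Mⱼₖ = B₃·vⱼvₖ + B₄·δⱼₖ (j,k = 1,2,3) is positive definite. -/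
set_option maxHeartbeats 1000000 in
theorem A0_positive_definite (c p' : ℝ) (v : Fin 3 → ℝ)
    (hc : 0 < c) (hv : ∑ k, v k ^ 2 < c ^ 2) (hp0 : 0 < p') (hpc : p' ≤ c ^ 2) :
    ∀ nv B₁ B₂ B₃ B₄ : ℝ, ∀ w : Fin 4 → ℝ,
    nv = ∑ k, v k ^ 2 →
    B₁ = c ^ 4 + 3 * p' * nv →
    B₂ = c ^ 4 + 2 * c ^ 2 * p' + p' * nv →
    B₃ = c ^ 2 * (c ^ 2 + 3 * p') →
    B₄ = c ^ 2 * p' * (c ^ 2 - nv) →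
    w = Fin.cons 0 v →
    (Matrix.of fun i j : Fin 4 =>
      if i = 0 ∧ j = 0 then B₁
      else if i = 0 then B₂ * w j
      else if j = 0 then B₂ * w i
      else B₃ * w i * w j + (if i = j then B₄ else 0)).PosDef := by
  intro nv B₁ B₂ B₃ B₄ w hnv hB1 hB2 hB3 hB4 hw
  have w0 : w 0 = 0 := by rw [hw]; rfl
  have w1 : w 1 = v 0 := by rw [hw]; rfl
  have w2 : w 2 = v 1 := by rw [hw]; rfl
  have w3 : w 3 = v 2 := by rw [hw]; rfl
  have hnn : nv = v 0 ^ 2 + v 1 ^ 2 + v 2 ^ 2 := by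
    rw [hnv, Fin.sum_univ_three]
  have hnlt : nv < c ^ 2 := by rw [hnv]; exact hv
  have hn0 : 0 ≤ nv := by rw [hnn]; positivity
  have hc2 : 0 < c ^ 2 := pow_pos hc 2
  have hc4' : 0 < c ^ 4 := pow_pos hc 4
  have hB1p : 0 < B₁ := by
    rw [hB1]
    have : 0 ≤ 3 * p' * nv := by positivity
    linarith
  have hB3p : 0 < B₃ := by
    rw [hB3]
    have : 0 < c ^ 2 + 3 * p' := by linarith
    positivity
  have hB4p : 0 < B₄ := by
    rw [hB4]
    have : 0 < c ^ 2 - nv := by linarith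
    positivity
  rw [Matrix.posDef_iff_dotProduct_mulVec]
  constructor
  · ext i j
    simp only [Matrix.conjTranspose_apply, Matrix.of_apply, star_trivial]
    fin_cases i <;> fin_cases j <;> simp <;> ring
  · intro x hx
    simp only [dotProduct, Matrix.mulVec, Matrix.of_apply, star_trivial,
      Fin.sum_univ_four, w0, w1, w2, w3]
    norm_num [Fin.ext_iff]
    set a := x 0 with ha
    set y1 := x 1 with hy1
    set y2 := x 2 with hy2
    set y3 := x 3 with hy3
    have hx' : ¬(a = 0 ∧ y1 = 0 ∧ y2 = 0 ∧ y3 = 0) := by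
      rintro ⟨h0, h1, h2, h3⟩
      exact hx (funext fun i => by fin_cases i <;> assumption)
    set s := v 0 * y1 + v 1 * y2 + v 2 * y3 with hs
    set m := y1 ^ 2 + y2 ^ 2 + y3 ^ 2 with hm
    clear_value a y1 y2 y3 s m
    have hm0 : 0 ≤ m := by rw [hm]; positivity
    have cauchy : s ^ 2 ≤ nv * m := by
      rw [hs, hm, hnn]
      nlinarith [sq_nonneg (v 0 * y2 - v 1 * y1), sq_nonneg (v 0 * y3 - v 2 * y1),
        sq_nonneg (v 1 * y3 - v 2 * y2)]
    have hpos : 0 < B₁ * a ^ 2 + 2 * B₂ * a * s + B₃ * s ^ 2 + B₄ * m := by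
      by_cases hmz : m = 0
      · have hsum : y1 ^ 2 + y2 ^ 2 + y3 ^ 2 = 0 := by rw [← hm]; exact hmz
        have h1 : y1 = 0 := by
          have : y1 ^ 2 = 0 := by
            have := sq_nonneg y1; have := sq_nonneg y2; have := sq_nonneg y3; linarith
          exact (pow_eq_zero_iff (by norm_num : (2:ℕ) ≠ 0)).mp this
        have h2 : y2 = 0 := by
          have : y2 ^ 2 = 0 := by
            have := sq_nonneg y1; have := sq_nonneg y2; have := sq_nonneg y3; linarith
          exact (pow_eq_zero_iff (by norm_num : (2:ℕ) ≠ 0)).mp this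
        have h3 : y3 = 0 := by
          have : y3 ^ 2 = 0 := by
            have := sq_nonneg y1; have := sq_nonneg y2; have := sq_nonneg y3; linarith
          exact (pow_eq_zero_iff (by norm_num : (2:ℕ) ≠ 0)).mp this
        have ha0 : a ≠ 0 := fun h => hx' ⟨h, h1, h2, h3⟩
        have hs0 : s = 0 := by rw [hs, h1, h2, h3]; ring
        have ha2 : 0 < a ^ 2 := by positivity
        rw [hs0, hmz]
        have := mul_pos hB1p ha2
        linarith
      · have hmpos : 0 < m := lt_of_le_of_ne hm0 (Ne.symm hmz)
        rcases eq_or_lt_of_le hn0 with hnz | hnpos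
        · -- nv = 0, so s ^ 2 ≤ 0, s = 0
          have hnz' : nv = 0 := hnz.symm
          rw [hnz', zero_mul] at cauchy
          have hs0 : s = 0 :=
            (pow_eq_zero_iff (by norm_num : (2:ℕ) ≠ 0)).mp
              (le_antisymm cauchy (sq_nonneg s))
          rw [hs0]
          have h1 := mul_pos hB4p hmpos
          have h2 := mul_nonneg hB1p.le (sq_nonneg a)
          linarith
        · -- nv > 0
          have hc4 : 0 < c ^ 4 - p' * nv := by
            have h1 : 0 ≤ (c ^ 2 - p') * nv := mul_nonneg (by linarith) hn0
            have h2 : 0 < c ^ 2 * (c ^ 2 - nv) := mul_pos hc2 (by linarith)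
            linarith [h1, h2]
          have hE : 0 < nv * (B₁ * B₃) + B₁ * B₄ - nv * B₂ ^ 2 := by
            have hid : nv * (B₁ * B₃) + B₁ * B₄ - nv * B₂ ^ 2
                = p' * (c ^ 2 - nv) ^ 2 * (c ^ 4 - p' * nv) := by
              rw [hB1, hB2, hB3, hB4]; ring
            rw [hid]
            have h1 : 0 < c ^ 2 - nv := by linarith
            positivity
          have key : (nv * B₁) * (B₁ * a ^ 2 + 2 * B₂ * a * s + B₃ * s ^ 2 + B₄ * m)
              = nv * (B₁ * a + B₂ * s) ^ 2
                + (nv * (B₁ * B₃) + B₁ * B₄ - nv * B₂ ^ 2) * s ^ 2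
                + (B₁ * B₄) * (nv * m - s ^ 2) := by ring
          have hnb : 0 < nv * B₁ := mul_pos hnpos hB1p
          have hterm1 : 0 ≤ nv * (B₁ * a + B₂ * s) ^ 2 :=
            mul_nonneg hnpos.le (sq_nonneg _)
          have hterm3 : 0 ≤ (B₁ * B₄) * (nv * m - s ^ 2) :=
            mul_nonneg (mul_nonneg hB1p.le hB4p.le) (by linarith)
          have hbig : 0 < (nv * B₁) * (B₁ * a ^ 2 + 2 * B₂ * a * s + B₃ * s ^ 2 + B₄ * m) := by
            rw [key]
            by_cases hsz : s = 0
            · have h4 : 0 < nv * m - s ^ 2 := by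
                have := mul_pos hnpos hmpos
                rw [hsz]; linarith [this]
              have h5 : 0 < (B₁ * B₄) * (nv * m - s ^ 2) :=
                mul_pos (mul_pos hB1p hB4p) h4
              have h6 : 0 ≤ (nv * (B₁ * B₃) + B₁ * B₄ - nv * B₂ ^ 2) * s ^ 2 :=
                mul_nonneg hE.le (sq_nonneg s)
              linarith
            · have hs2p : 0 < s ^ 2 := by positivity
              have h5 := mul_pos hE hs2p
              linarith
          rcases mul_pos_iff.mp hbig with ⟨_, h⟩ | ⟨h1, _⟩
          · exact h
          · exact absurd hnb (not_lt.mpr h1.le)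
    rw [hs, hm] at hpos
    linarith [hpos]
end

section
/- Let c > 0 and let Φ : D → (0,∞) be a positive C¹ function on an interval D ⊆ ℝ with Φ' < 0 everywhere. Define w : D × {v ∈ ℝ³ : |v|² < c²} → ℝ⁴ by w₀(ρ,v) = −c³Φ(ρ)/√(c² − |v|²) + c² and wₖ(ρ,v) = c·Φ(ρ)·vₖ/√(c² − |v|²) for k = 1,2,3. Then the Jacobian determinant of w at (ρ,v) equals −c⁶·Φ(ρ)³·Φ'(ρ)/(c² − |v|²)², which is strictly positive. -/
set_option maxHeartbeats 2000000

set_option maxHeartbeats 1000000 in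
theorem my_det_fin_four {R : Type*} [CommRing R] (A : Matrix (Fin 4) (Fin 4) R) :
    A.det =
      A 0 0 * (A 1 1 * (A 2 2 * A 3 3 - A 2 3 * A 3 2) - A 1 2 * (A 2 1 * A 3 3 - A 2 3 * A 3 1)
        + A 1 3 * (A 2 1 * A 3 2 - A 2 2 * A 3 1))
      - A 0 1 * (A 1 0 * (A 2 2 * A 3 3 - A 2 3 * A 3 2) - A 1 2 * (A 2 0 * A 3 3 - A 2 3 * A 3 0)
        + A 1 3 * (A 2 0 * A 3 2 - A 2 2 * A 3 0))
      + A 0 2 * (A 1 0 * (A 2 1 * A 3 3 - A 2 3 * A 3 1) - A 1 1 * (A 2 0 * A 3 3 - A 2 3 * A 3 0)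
        + A 1 3 * (A 2 0 * A 3 1 - A 2 1 * A 3 0))
      - A 0 3 * (A 1 0 * (A 2 1 * A 3 2 - A 2 2 * A 3 1) - A 1 1 * (A 2 0 * A 3 2 - A 2 2 * A 3 0)
        + A 1 2 * (A 2 0 * A 3 1 - A 2 1 * A 3 0)) := by
  rw [Matrix.det_succ_row_zero]
  norm_num [Fin.sum_univ_succ, Matrix.det_fin_three, Fin.lt_def,
    show (Fin.succ 2 : Fin 4) = 3 from rfl, show (Fin.castSucc 2 : Fin 4) = 2 from rfl,
    show Fin.succAbove (1 : Fin 4) 2 = 3 from rfl, show Fin.succAbove (2 : Fin 4) 2 = 3 from rfl,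
    show Fin.succAbove (3 : Fin 4) 2 = 2 from rfl]
  ring



theorem jacobian_determinant (c : ℝ) (hc : 0 < c) (D : Set ℝ) (hD : IsOpen D)
    (hDi : D.OrdConnected) (Φ Φ' : ℝ → ℝ)
    (hΦpos : ∀ ρ ∈ D, 0 < Φ ρ)
    (hΦd : ∀ ρ ∈ D, HasDerivAt Φ (Φ' ρ) ρ)
    (hΦ'c : ContinuousOn Φ' D)
    (hΦ'neg : ∀ ρ ∈ D, Φ' ρ < 0) :
    ∀ W : (Fin 4 → ℝ) → (Fin 4 → ℝ),
    W = (fun x => Fin.cons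
        (-(c ^ 3 * Φ (x 0)) / Real.sqrt (c ^ 2 - ∑ k : Fin 3, x k.succ ^ 2) + c ^ 2)
        (fun k : Fin 3 => c * Φ (x 0) * x k.succ /
          Real.sqrt (c ^ 2 - ∑ k : Fin 3, x k.succ ^ 2))) →
    ∀ x : Fin 4 → ℝ, x 0 ∈ D → (∑ k : Fin 3, x k.succ ^ 2) < c ^ 2 →
      (fderiv ℝ W x).det =
        -(c ^ 6 * Φ (x 0) ^ 3 * Φ' (x 0)) / (c ^ 2 - ∑ k : Fin 3, x k.succ ^ 2) ^ 2 ∧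
      0 < -(c ^ 6 * Φ (x 0) ^ 3 * Φ' (x 0)) / (c ^ 2 - ∑ k : Fin 3, x k.succ ^ 2) ^ 2 := by
  intro W hW x hx hv
  have hsum : ∀ y : Fin 4 → ℝ, (∑ k : Fin 3, y k.succ ^ 2) = y 1 ^ 2 + y 2 ^ 2 + y 3 ^ 2 := by
    intro y; rw [Fin.sum_univ_three]; rfl
  set s : ℝ := c ^ 2 - (x 1 ^ 2 + x 2 ^ 2 + x 3 ^ 2) with hs_def
  have hs : 0 < s := by rw [hs_def]; have := hv; rw [hsum] at this; linarith
  set g : ℝ := Real.sqrt s with hg_def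
  have hg : 0 < g := Real.sqrt_pos.2 hs
  have hg2 : g ^ 2 = s := Real.sq_sqrt hs.le
  have hgne : g ≠ 0 := hg.ne'
  have hsne : s ≠ 0 := hs.ne'
  set pr : Fin 4 → ((Fin 4 → ℝ) →L[ℝ] ℝ) := fun j => ContinuousLinearMap.proj j with hpr_def
  -- the Jacobian matrix
  set M : Matrix (Fin 4) (Fin 4) ℝ := fun i j =>
    if i = 0 then (if j = 0 then -(c ^ 3 * Φ' (x 0)) / g else -(c ^ 3 * Φ (x 0) * x j) / (s * g))
    else (if j = 0 then c * Φ' (x 0) * x i / g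
          else c * Φ (x 0) * ((if i = j then s else 0) + x i * x j) / (s * g)) with hM_def
  set rows : Fin 4 → ((Fin 4 → ℝ) →L[ℝ] ℝ) := fun i =>
    M i 0 • pr 0 + M i 1 • pr 1 + M i 2 • pr 2 + M i 3 • pr 3 with hrows_def
  -- basic derivatives
  have hproj : ∀ j : Fin 4, HasFDerivAt (fun y : Fin 4 → ℝ => y j) (pr j) x :=
    fun j => (pr j).hasFDerivAt
  have hP : HasFDerivAt (fun y : Fin 4 → ℝ => Φ (y 0)) (Φ' (x 0) • pr 0) x :=
    (hΦd _ hx).comp_hasFDerivAt x (hproj 0)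
  have hsq : ∀ j : Fin 4, HasFDerivAt (fun y : Fin 4 → ℝ => y j ^ 2)
      ((x j + x j) • pr j) x := by
    intro j
    have := (hproj j).mul (hproj j)
    simpa [pow_two, add_smul, Pi.mul_def] using this
  have hS : HasFDerivAt (fun y : Fin 4 → ℝ => c ^ 2 - (y 1 ^ 2 + y 2 ^ 2 + y 3 ^ 2))
      (-((x 1 + x 1) • pr 1 + (x 2 + x 2) • pr 2 + (x 3 + x 3) • pr 3)) x :=
    ((hasFDerivAt_const (c ^ 2) x).sub (((hsq 1).add (hsq 2)).add (hsq 3)))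
      |>.congr_fderiv (by abel)
  have hG : HasFDerivAt (fun y : Fin 4 → ℝ => Real.sqrt (c ^ 2 - (y 1 ^ 2 + y 2 ^ 2 + y 3 ^ 2)))
      ((1 / (2 * g)) • (-((x 1 + x 1) • pr 1 + (x 2 + x 2) • pr 2 + (x 3 + x 3) • pr 3))) x :=
    (Real.hasDerivAt_sqrt hsne).comp_hasFDerivAt x hS
  have hGinv : HasFDerivAt
      (fun y : Fin 4 → ℝ => (Real.sqrt (c ^ 2 - (y 1 ^ 2 + y 2 ^ 2 + y 3 ^ 2)))⁻¹)
      ((-(g ^ 2)⁻¹) • ((1 / (2 * g)) • (-((x 1 + x 1) • pr 1 + (x 2 + x 2) • pr 2 + (x 3 + x 3) • pr 3)))) x :=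
    (hasDerivAt_inv hgne).comp_hasFDerivAt x hG
  -- component functions
  have h0 : HasFDerivAt (fun y : Fin 4 → ℝ =>
      -(c ^ 3 * Φ (y 0)) / Real.sqrt (c ^ 2 - (y 1 ^ 2 + y 2 ^ 2 + y 3 ^ 2)) + c ^ 2)
      (rows 0) x := by
    simp only [div_eq_mul_inv]
    refine ((((hP.const_mul (c ^ 3)).neg).mul hGinv).add_const (c ^ 2)).congr_fderiv ?_
    ext y
    have hgx : Real.sqrt (c ^ 2 - (x 1 ^ 2 + x 2 ^ 2 + x 3 ^ 2)) = g := rfl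
    simp only [hrows_def, hM_def, hpr_def, ContinuousLinearMap.add_apply,
      ContinuousLinearMap.smul_apply, ContinuousLinearMap.neg_apply,
      ContinuousLinearMap.proj_apply, smul_eq_mul, hgx]
    simp
    rw [show s = g ^ 2 from hg2.symm]
    field_simp
    ring
  have hk : ∀ k : Fin 3, HasFDerivAt (fun y : Fin 4 → ℝ =>
      c * Φ (y 0) * y k.succ / Real.sqrt (c ^ 2 - (y 1 ^ 2 + y 2 ^ 2 + y 3 ^ 2)))
      (rows k.succ) x := by
    intro k
    simp only [div_eq_mul_inv]
    refine (((hP.const_mul c).mul (hproj k.succ)).mul hGinv).congr_fderiv ?_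
    ext y
    have hgx : Real.sqrt (c ^ 2 - (x 1 ^ 2 + x 2 ^ 2 + x 3 ^ 2)) = g := rfl
    fin_cases k <;>
    · simp only [hrows_def, hM_def, hpr_def, ContinuousLinearMap.add_apply,
        ContinuousLinearMap.smul_apply, ContinuousLinearMap.neg_apply,
        ContinuousLinearMap.proj_apply, smul_eq_mul, hgx,
        show (Fin.succ 2 : Fin 4) = 3 from rfl, show (((2:ℕ):Fin 3)).succ = (3:Fin 4) from rfl,
        show Fin.succ (⟨2, by norm_num⟩ : Fin 3) = (3:Fin 4) from rfl]
      simp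
      rw [show s = g ^ 2 from hg2.symm]
      field_simp
      ring
  -- assemble
  set φ : Fin 4 → (Fin 4 → ℝ) → ℝ := Fin.cons
    (fun y => -(c ^ 3 * Φ (y 0)) / Real.sqrt (c ^ 2 - (y 1 ^ 2 + y 2 ^ 2 + y 3 ^ 2)) + c ^ 2)
    (fun k y => c * Φ (y 0) * y k.succ / Real.sqrt (c ^ 2 - (y 1 ^ 2 + y 2 ^ 2 + y 3 ^ 2)))
    with hφ_def
  have hWeq : W = fun y i => φ i y := by
    subst hW
    funext y i
    refine Fin.cases ?_ (fun k => ?_) i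
    · simp [hφ_def, hsum y]
    · simp [hφ_def, hsum y]
  have hWd : HasFDerivAt W (ContinuousLinearMap.pi rows) x := by
    rw [hWeq]
    refine hasFDerivAt_pi.2 (fun i => ?_)
    refine Fin.cases ?_ (fun k => ?_) i
    · simpa [hφ_def] using h0
    · simpa [hφ_def] using hk k
  have hdM : (ContinuousLinearMap.pi rows : (Fin 4 → ℝ) →L[ℝ] (Fin 4 → ℝ)).det = M.det := by
    rw [ContinuousLinearMap.det, ← LinearMap.det_toMatrix']
    congr 1
    ext i j
    rw [LinearMap.toMatrix'_apply]
    show rows i (Pi.single j 1) = M i j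
    fin_cases j <;> simp [hrows_def, hpr_def]
  have hdet : M.det = -(c ^ 6 * Φ (x 0) ^ 3 * Φ' (x 0)) / s ^ 2 := by
    rw [my_det_fin_four]
    simp only [hM_def]
    simp
    rw [← hg2]
    field_simp
    ring
  constructor
  · rw [hWd.fderiv, hdM, hdet, hsum x]
  · have h1 : 0 < -(c ^ 6 * Φ (x 0) ^ 3 * Φ' (x 0)) := by
      have := hΦ'neg _ hx
      have := hΦpos _ hx
      have h6 : (0:ℝ) < c ^ 6 := pow_pos hc 6
      have h3 : (0:ℝ) < Φ (x 0) ^ 3 := pow_pos (hΦpos _ hx) 3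
      nlinarith [mul_pos h6 h3]
    have h2 : (0:ℝ) < (c ^ 2 - ∑ k : Fin 3, x k.succ ^ 2) ^ 2 := by
      rw [hsum x]; positivity
    exact div_pos h1 h2
end
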